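/- (Validity of Hoffman cuts.) For any subsets T₀ ⊆ {1,…,T} and N₀ ⊆ {1,…,N}, if there exists ℓ ∈ X ∩ Y_p, then Σ_{t∈T₀} p_t ≤ Σ_{n∈N₀} E_n + Σ_{t∈T₀, n∉N₀} x̄_{n,t} − Σ_{t∉T₀, n∈N₀} x̲_{n,t}; in particular every cut added in the non-intrusive optimal disaggregation algorithm is satisfied by every aggregate allocation p admitting a feasible disaggregation. -/
import Mathlib

open Finset

/-- **Validity of Hoffman cuts.**
For any subsets `T₀ ⊆ {1,…,T}` and `N₀ ⊆ {1,…,N}`, if there exists `ℓ ∈ X ∩ Y_p`, then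
`Σ_{t∈T₀} p_t ≤ Σ_{n∈N₀} E_n + Σ_{t∈T₀, n∉N₀} x̄_{n,t} − Σ_{t∉T₀, n∈N₀} x̲_{n,t}`;
in particular every cut added in the non-intrusive optimal disaggregation algorithm is
satisfied by every aggregate allocation `p` admitting a feasible disaggregation. -/
theorem hoffman_cuts_valid
    (N T : ℕ) (hN : 0 < N) (hT : 0 < T)
    (E : Fin N → ℝ) (lb ub : Fin N → Fin T → ℝ)
    (hbounds : ∀ n t, lb n t ≤ ub n t)
    (p : Fin T → ℝ)
    (X : Set (Fin N → Fin T → ℝ))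
    (hXdef : X = {ℓ | ∀ n, (∑ t, ℓ n t) = E n ∧ ∀ t, lb n t ≤ ℓ n t ∧ ℓ n t ≤ ub n t})
    (Y : Set (Fin N → Fin T → ℝ))
    (hYdef : Y = {y | ∀ t, (∑ n, y n t) = p t})
    (T0 : Finset (Fin T)) (N0 : Finset (Fin N))
    (ℓ : Fin N → Fin T → ℝ) (hℓ : ℓ ∈ X ∩ Y) :
    (∑ t ∈ T0, p t) ≤ (∑ n ∈ N0, E n)
        + (∑ t ∈ T0, ∑ n ∈ N0ᶜ, ub n t)
        - ∑ t ∈ T0ᶜ, ∑ n ∈ N0, lb n t := by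
  obtain ⟨hX, hY⟩ := hℓ
  rw [hXdef] at hX
  rw [hYdef] at hY
  have hp : ∑ t ∈ T0, p t
      = ∑ t ∈ T0, ∑ n ∈ N0, ℓ n t + ∑ t ∈ T0, ∑ n ∈ N0ᶜ, ℓ n t := by
    rw [← Finset.sum_add_distrib]
    refine Finset.sum_congr rfl fun t _ => ?_
    rw [← hY t, ← Finset.sum_add_sum_compl N0]
  have hE : ∑ n ∈ N0, E n
      = ∑ t ∈ T0, ∑ n ∈ N0, ℓ n t + ∑ t ∈ T0ᶜ, ∑ n ∈ N0, ℓ n t := by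
    rw [Finset.sum_comm, Finset.sum_comm (s := T0ᶜ), ← Finset.sum_add_distrib]
    refine Finset.sum_congr rfl fun n _ => ?_
    rw [Finset.sum_add_sum_compl, (hX n).1]
  have h1 : ∑ t ∈ T0, ∑ n ∈ N0ᶜ, ℓ n t ≤ ∑ t ∈ T0, ∑ n ∈ N0ᶜ, ub n t :=
    Finset.sum_le_sum fun t _ => Finset.sum_le_sum fun n _ => ((hX n).2 t).2
  have h2 : ∑ t ∈ T0ᶜ, ∑ n ∈ N0, lb n t ≤ ∑ t ∈ T0ᶜ, ∑ n ∈ N0, ℓ n t :=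
    Finset.sum_le_sum fun t _ => Finset.sum_le_sum fun n _ => ((hX n).2 t).1
  rw [hp, hE]
  linarith
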